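/- At a critical point t_crit > 0 of a, i.e. where b(t_crit) = 1/P(t_crit), any C² solution of the system da/dt = (Pa/t)(b-1/P), db/dt = (P/(2t))(1-b²) - (PQ/2)(1-a²) - Qb satisfies d²a/dt²(t_crit) = (3a(t_crit)/(2t_crit²(2t_crit²+3)))·[(4a(t_crit)² - 2)t_crit² + 3]. -/

import Mathlib

/-- Metric coefficient `P(t) = √6·√(2t²+2)/√(2t²+3)`. -/
noncomputable def Pfun (t : ℝ) : ℝ := Real.sqrt 6 * Real.sqrt (2 * t ^ 2 + 2) / Real.sqrt (2 * t ^ 2 + 3)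

/-- Metric coefficient `Q(t) = t/(t²+1)`. -/
noncomputable def Qfun (t : ℝ) : ℝ := t / (t ^ 2 + 1)

/-- `(a,b)` solves the invariant Spin(7) instanton system on the set `s`. -/
def SolvesSpin7 (a b : ℝ → ℝ) (s : Set ℝ) : Prop :=
  ∀ t ∈ s,
    HasDerivAt a (Pfun t * a t / t * (b t - 1 / Pfun t)) t ∧
    HasDerivAt b
      (Pfun t / (2 * t) * (1 - (b t) ^ 2) - Pfun t * Qfun t / 2 * (1 - (a t) ^ 2) - Qfun t * b t) t

/-- At a critical point `t_crit > 0` of `a` (i.e. where `b·P = 1`), the second derivative of `a`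
equals `(3a/(2t²(2t²+3)))·[(4a² - 2)t² + 3]`. -/
theorem spin7_second_derivative_at_critical (a b : ℝ → ℝ) (l u tcrit A : ℝ)
    (hl : 0 ≤ l) (hsol : SolvesSpin7 a b (Set.Ioo l u))
    (htc : tcrit ∈ Set.Ioo l u)
    (hcrit : b tcrit * Pfun tcrit = 1)
    (hA : HasDerivAt (fun t => Pfun t * a t / t * (b t - 1 / Pfun t)) A tcrit) :
    A = 3 * a tcrit / (2 * tcrit ^ 2 * (2 * tcrit ^ 2 + 3)) *
      ((4 * (a tcrit) ^ 2 - 2) * tcrit ^ 2 + 3) := by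
  obtain ⟨ha, hb⟩ := hsol tcrit htc
  have ht : 0 < tcrit := lt_of_le_of_lt hl htc.1
  have htne : tcrit ≠ 0 := ne_of_gt ht
  have h2 : (0:ℝ) < 2 * tcrit ^ 2 + 2 := by positivity
  have h3 : (0:ℝ) < 2 * tcrit ^ 2 + 3 := by positivity
  have hu2 : Real.sqrt (2 * tcrit ^ 2 + 2) ^ 2 = 2 * tcrit ^ 2 + 2 := Real.sq_sqrt h2.le
  have hv2 : Real.sqrt (2 * tcrit ^ 2 + 3) ^ 2 = 2 * tcrit ^ 2 + 3 := Real.sq_sqrt h3.le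
  have hw2 : Real.sqrt 6 ^ 2 = (6:ℝ) := Real.sq_sqrt (by norm_num)
  have hupos : 0 < Real.sqrt (2 * tcrit ^ 2 + 2) := Real.sqrt_pos.2 h2
  have hvpos : 0 < Real.sqrt (2 * tcrit ^ 2 + 3) := Real.sqrt_pos.2 h3
  have hwpos : 0 < Real.sqrt 6 := Real.sqrt_pos.2 (by norm_num)
  have hPdef : Pfun tcrit
      = Real.sqrt 6 * Real.sqrt (2 * tcrit ^ 2 + 2) / Real.sqrt (2 * tcrit ^ 2 + 3) := rfl
  have hPpos : 0 < Pfun tcrit := by rw [hPdef]; positivity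
  have hPne : Pfun tcrit ≠ 0 := ne_of_gt hPpos
  have hinner2 : HasDerivAt (fun s : ℝ => 2 * s ^ 2 + 2) (4 * tcrit) tcrit := by
    have h := ((hasDerivAt_pow 2 tcrit).const_mul (2:ℝ)).add_const (2:ℝ)
    refine h.congr_deriv ?_
    push_cast; ring
  have hinner3 : HasDerivAt (fun s : ℝ => 2 * s ^ 2 + 3) (4 * tcrit) tcrit := by
    have h := ((hasDerivAt_pow 2 tcrit).const_mul (2:ℝ)).add_const (3:ℝ)
    refine h.congr_deriv ?_
    push_cast; ring
  have hu : HasDerivAt (fun s : ℝ => Real.sqrt (2 * s ^ 2 + 2))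
      (1 / (2 * Real.sqrt (2 * tcrit ^ 2 + 2)) * (4 * tcrit)) tcrit :=
    (Real.hasDerivAt_sqrt h2.ne').comp tcrit hinner2
  have hv : HasDerivAt (fun s : ℝ => Real.sqrt (2 * s ^ 2 + 3))
      (1 / (2 * Real.sqrt (2 * tcrit ^ 2 + 3)) * (4 * tcrit)) tcrit :=
    (Real.hasDerivAt_sqrt h3.ne').comp tcrit hinner3
  have hP : HasDerivAt Pfun
      ((Real.sqrt 6 * (1 / (2 * Real.sqrt (2 * tcrit ^ 2 + 2)) * (4 * tcrit)) * Real.sqrt (2 * tcrit ^ 2 + 3)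
        - Real.sqrt 6 * Real.sqrt (2 * tcrit ^ 2 + 2) * (1 / (2 * Real.sqrt (2 * tcrit ^ 2 + 3)) * (4 * tcrit)))
        / Real.sqrt (2 * tcrit ^ 2 + 3) ^ 2) tcrit := by
    unfold Pfun
    exact (hu.const_mul (Real.sqrt 6)).div hv hvpos.ne'
  set U := Real.sqrt (2 * tcrit ^ 2 + 2) with hUd
  set V := Real.sqrt (2 * tcrit ^ 2 + 3) with hVd
  set W := Real.sqrt 6 with hWd
  have hDeq : (W * (1 / (2 * U) * (4 * tcrit)) * V - W * U * (1 / (2 * V) * (4 * tcrit))) / V ^ 2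
      = (2 * tcrit / (2 * tcrit ^ 2 + 2) - 2 * tcrit / (2 * tcrit ^ 2 + 3)) * Pfun tcrit := by
    rw [hPdef, ← hu2, ← hv2]
    field_simp
    ring
  have hP' : HasDerivAt Pfun
      ((2 * tcrit / (2 * tcrit ^ 2 + 2) - 2 * tcrit / (2 * tcrit ^ 2 + 3)) * Pfun tcrit) tcrit := by
    rw [← hDeq]; exact hP
  have hb' : b tcrit = 1 / Pfun tcrit := by rw [eq_div_iff hPne]; exact hcrit
  have hp2 : Pfun tcrit ^ 2 = 12 * (tcrit ^ 2 + 1) / (2 * tcrit ^ 2 + 3) := by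
    rw [hPdef, div_pow, mul_pow, hu2, hv2, hw2]; ring
  have hg := hb.sub ((hasDerivAt_const tcrit (1:ℝ)).div hP' hPne)
  have hf := (hP'.mul ha).div (hasDerivAt_id tcrit) htne
  have hAeq := hA.unique (hf.mul hg)
  have key : A = a tcrit * Pfun tcrit ^ 2
        * (1 / (2 * tcrit ^ 2) - Qfun tcrit * (1 - a tcrit ^ 2) / (2 * tcrit))
      - a tcrit / (2 * tcrit ^ 2) - a tcrit * Qfun tcrit / tcrit
      + a tcrit / tcrit * (2 * tcrit / (2 * tcrit ^ 2 + 2) - 2 * tcrit / (2 * tcrit ^ 2 + 3)) := by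
    rw [hAeq, hb']
    simp only [id_eq, Pi.div_apply, Pi.mul_apply]
    field_simp
    ring
  rw [key, hp2, (show Qfun tcrit = tcrit / (tcrit ^ 2 + 1) from rfl)]
  have h1 : (tcrit:ℝ) ^ 2 + 1 ≠ 0 := by positivity
  field_simp
  ring
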